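/- Let w : ℕ → Fin m → ℝ be weights with w 1 i = 1 for all i, updated by w (t+1) i = w t i * exp(-η * [h_t(x_i) = y_i]), where h_t are hypotheses and η > 0. Let D_t be the normalized distribution of w t, and α_t = Pr_{i ~ D_t}[h_t(x_i) = y_i]. Then for every i, exp(-η * H(x_i, y_i)) ≤ m * exp(-η * Σ_{t=1}^T α_t + T η²), where H(x,y) = Σ_{t=1}^T [h_t(x) = y]. Consequently, Σ_{t=1}^T α_t ≤ ln(m)/η + ηT + H(x_i, y_i). -/

import Mathlib

/-- Hedge potential analysis: with weights initialized to 1 and multiplicatively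
updated by `exp(-η·[h_t(x_i)=y_i])`, every example's exponentiated score is bounded
by the potential, and consequently `Σ α_t ≤ ln(m)/η + ηT + H(x_i,y_i)`. -/
theorem hedge_potential {X Y : Type*} [DecidableEq Y] (m T : ℕ) (hm : 1 ≤ m)
    (η : ℝ) (hη : 0 < η)
    (x : Fin m → X) (y : Fin m → Y) (h : ℕ → X → Y)
    (w : ℕ → Fin m → ℝ)
    (hw1 : ∀ i, w 1 i = 1)
    (hwrec : ∀ t, 1 ≤ t → ∀ i, w (t + 1) i
      = w t i * Real.exp (-η * (if h t (x i) = y i then (1 : ℝ) else 0)))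
    (α : ℕ → ℝ)
    (hα : ∀ t, α t = ∑ i, (w t i / ∑ j, w t j) * (if h t (x i) = y i then (1 : ℝ) else 0))
    (H : X → Y → ℝ)
    (hH : ∀ a b, H a b = ∑ t ∈ Finset.Icc 1 T, (if h t a = b then (1 : ℝ) else 0)) :
    ∀ i : Fin m,
      Real.exp (-η * H (x i) (y i))
        ≤ m * Real.exp (-η * ∑ t ∈ Finset.Icc 1 T, α t + T * η ^ 2) ∧
      ∑ t ∈ Finset.Icc 1 T, α t ≤ Real.log m / η + η * T + H (x i) (y i) := by
  have hne : Nonempty (Fin m) := ⟨⟨0, hm⟩⟩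
  set c : ℕ → Fin m → ℝ := fun t j => if h t (x j) = y j then (1:ℝ) else 0 with hcdef
  -- closed form for weights
  have hwf : ∀ t j, w (t+1) j = Real.exp (-η * ∑ s ∈ Finset.Icc 1 t, c s j) := by
    intro t
    induction t with
    | zero => intro j; simp [hw1]
    | succ n ih =>
      intro j
      rw [hwrec (n+1) (by omega) j, ih j, ← Real.exp_add]
      congr 1
      rw [Finset.sum_Icc_succ_top (by omega : 1 ≤ n+1)]
      ring
  have hwpos : ∀ t, 1 ≤ t → ∀ j, 0 < w t j := by
    intro t ht j
    obtain ⟨n, rfl⟩ := Nat.exists_eq_add_of_le ht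
    rw [add_comm, hwf]
    exact Real.exp_pos _
  have hWpos : ∀ t, 1 ≤ t → 0 < ∑ j, w t j := fun t ht =>
    Finset.sum_pos (fun j _ => hwpos t ht j) Finset.univ_nonempty
  -- exp bound
  have hexpb : ∀ j t, Real.exp (-η * c t j) ≤ 1 - η * c t j + η ^ 2 := by
    intro j t
    have h1 : (1:ℝ) + η ≤ Real.exp η := by linarith [Real.add_one_le_exp η]
    have hp : (0:ℝ) < 1 + η := by linarith
    have h2 : Real.exp (-η) ≤ 1 / (1 + η) := by
      rw [Real.exp_neg, one_div]
      exact inv_anti₀ hp h1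
    have h3 : 1/(1+η) ≤ 1 - η + η^2 := by
      rw [div_le_iff₀ hp]; nlinarith
    simp only [hcdef]
    split
    · simp only [mul_one]; linarith
    · simp only [mul_zero, neg_zero, Real.exp_zero]; nlinarith
  -- one-step bound on total weight
  have hstep : ∀ t, 1 ≤ t →
      (∑ j, w (t+1) j) ≤ (∑ j, w t j) * Real.exp (-η * α t + η ^ 2) := by
    intro t ht
    have hW := hWpos t ht
    have hsum : ∑ j, w t j * c t j = α t * ∑ j, w t j := by
      rw [hα t, Finset.sum_mul]
      apply Finset.sum_congr rfl
      intro j _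
      field_simp [hcdef]
      rfl
    have h1 : (∑ j, w (t+1) j) ≤ (∑ j, w t j) * (1 - η * α t + η ^ 2) := by
      calc (∑ j, w (t+1) j) = ∑ j, w t j * Real.exp (-η * c t j) := by
            apply Finset.sum_congr rfl; intro j _; exact hwrec t ht j
        _ ≤ ∑ j, w t j * (1 - η * c t j + η ^ 2) := by
            apply Finset.sum_le_sum
            intro j _
            exact mul_le_mul_of_nonneg_left (hexpb j t) (le_of_lt (hwpos t ht j))
        _ = (∑ j, w t j) * (1 - η * α t + η ^ 2) := by
            have hA : ∑ j, w t j * (1 - η * c t j + η ^ 2)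
                = (∑ j, w t j) - η * (∑ j, w t j * c t j) + η ^ 2 * (∑ j, w t j) := by
              rw [Finset.mul_sum, Finset.mul_sum, ← Finset.sum_sub_distrib,
                ← Finset.sum_add_distrib]
              exact Finset.sum_congr rfl fun j _ => by ring
            rw [hA, hsum]; ring
    have h2 : 1 - η * α t + η ^ 2 ≤ Real.exp (-η * α t + η ^ 2) := by
      have := Real.add_one_le_exp (-η * α t + η ^ 2)
      linarith
    calc (∑ j, w (t+1) j) ≤ (∑ j, w t j) * (1 - η * α t + η ^ 2) := h1
      _ ≤ (∑ j, w t j) * Real.exp (-η * α t + η ^ 2) :=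
          mul_le_mul_of_nonneg_left h2 (le_of_lt hW)
  -- total weight bound by induction
  have hpot : ∀ T', (∑ j, w (T'+1) j)
      ≤ m * Real.exp (-η * ∑ t ∈ Finset.Icc 1 T', α t + T' * η ^ 2) := by
    intro T'
    induction T' with
    | zero => simp [hw1]
    | succ n ih =>
      push_cast
      calc (∑ j, w (n+1+1) j) ≤ (∑ j, w (n+1) j) * Real.exp (-η * α (n+1) + η ^ 2) :=
            hstep (n+1) (by omega)
        _ ≤ (m * Real.exp (-η * ∑ t ∈ Finset.Icc 1 n, α t + n * η ^ 2))
              * Real.exp (-η * α (n+1) + η ^ 2) := by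
            apply mul_le_mul_of_nonneg_right ih (le_of_lt (Real.exp_pos _))
        _ = m * Real.exp (-η * ∑ t ∈ Finset.Icc 1 (n+1), α t + (n+1) * η ^ 2) := by
            rw [mul_assoc, ← Real.exp_add]
            congr 1
            congr 1
            rw [Finset.sum_Icc_succ_top (by omega : 1 ≤ n+1)]
            ring
  intro i
  have hfirst : Real.exp (-η * H (x i) (y i))
      ≤ m * Real.exp (-η * ∑ t ∈ Finset.Icc 1 T, α t + T * η ^ 2) := by
    have hHe : Real.exp (-η * H (x i) (y i)) = w (T+1) i := by
      rw [hwf, hH]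
    rw [hHe]
    calc w (T+1) i ≤ ∑ j, w (T+1) j :=
          Finset.single_le_sum (fun j _ => le_of_lt (hwpos (T+1) (by omega) j))
            (Finset.mem_univ i)
      _ ≤ _ := hpot T
  refine ⟨hfirst, ?_⟩
  have hmpos : (0:ℝ) < m := by positivity
  have hlog : -η * H (x i) (y i)
      ≤ Real.log m + (-η * ∑ t ∈ Finset.Icc 1 T, α t + T * η ^ 2) := by
    have := Real.log_le_log (Real.exp_pos _) hfirst
    rwa [Real.log_exp, Real.log_mul (ne_of_gt hmpos) (ne_of_gt (Real.exp_pos _)),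
      Real.log_exp] at this
  have key : Real.log m / η + η * T + H (x i) (y i)
      = (Real.log m + T * η ^ 2 + η * H (x i) (y i)) / η := by
    field_simp
  rw [key, le_div_iff₀ hη]
  nlinarith [hlog]
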